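/- Let $G$ be a group and $N \trianglelefteq G$ a normal subgroup with the unique-roots property. Then for every $f \in N$ of infinite order and every nonzero integer $t$, the normalizer in $G$ of the cyclic subgroup $\langle f \rangle$ equals the normalizer in $G$ of the cyclic subgroup $\langle f^t \rangle$: $N_G(\langle f \rangle) = N_G(\langle f^t \rangle)$. -/

import Mathlib

private lemma conj_eq_self_or_inv {G : Type*} [Group G] (a x : G)
    (ha : ¬ IsOfFinOrder a) (hx : x ∈ Subgroup.normalizer (Subgroup.zpowers a : Set G)) :
    x * a * x⁻¹ = a ∨ x * a * x⁻¹ = a⁻¹ := by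
  have hinj : Function.Injective (fun n : ℤ => a ^ n) :=
    injective_zpow_iff_not_isOfFinOrder.mpr ha
  obtain ⟨k, hk⟩ := (Subgroup.mem_normalizer_iff.mp hx a).mp (Subgroup.mem_zpowers a)
  obtain ⟨m, hm⟩ := (Subgroup.mem_normalizer_iff.mp (inv_mem hx) a).mp (Subgroup.mem_zpowers a)
  have hk' : a ^ k = x * a * x⁻¹ := hk
  have hm' : a ^ m = x⁻¹ * a * x⁻¹⁻¹ := hm
  rw [inv_inv] at hm'
  have econj : (x⁻¹ * a * x⁻¹⁻¹) ^ k = x⁻¹ * a ^ k * x⁻¹⁻¹ := conj_zpow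
  rw [inv_inv] at econj
  have key : a ^ ((1 : ℤ)) = a ^ (k * m) := by
    calc a ^ (1 : ℤ) = a := zpow_one a
      _ = x⁻¹ * (x * a * x⁻¹) * x := by group
      _ = x⁻¹ * a ^ k * x := by rw [hk']
      _ = (x⁻¹ * a * x) ^ k := econj.symm
      _ = (a ^ m) ^ k := by rw [hm']
      _ = a ^ (m * k) := by rw [← zpow_mul]
      _ = a ^ (k * m) := by rw [mul_comm]
  have hkm : k * m = 1 := (hinj key).symm
  rcases Int.isUnit_iff.mp (IsUnit.of_mul_eq_one (a := k) m hkm) with h1 | h1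
  · left; rw [← hk', h1, zpow_one]
  · right; rw [← hk', h1]; simp

private lemma mem_normalizer_of_conj' {G : Type*} [Group G] (f g : G)
    (h1 : g * f * g⁻¹ = f ∨ g * f * g⁻¹ = f⁻¹)
    (h2 : g⁻¹ * f * g = f ∨ g⁻¹ * f * g = f⁻¹) :
    g ∈ Subgroup.normalizer (Subgroup.zpowers f : Set G) := by
  rw [Subgroup.mem_normalizer_iff]
  intro h
  constructor
  · rintro ⟨n, rfl⟩
    show g * f ^ n * g⁻¹ ∈ Subgroup.zpowers f
    have e : g * f ^ n * g⁻¹ = (g * f * g⁻¹) ^ n := (conj_zpow).symm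
    rw [e]
    rcases h1 with h1 | h1 <;> rw [h1]
    · exact ⟨n, rfl⟩
    · exact ⟨-n, by simp [zpow_neg, inv_zpow]⟩
  · rintro ⟨n, hn⟩
    have hn' : f ^ n = g * h * g⁻¹ := hn
    have econj : (g⁻¹ * f * g⁻¹⁻¹) ^ n = g⁻¹ * f ^ n * g⁻¹⁻¹ := conj_zpow
    rw [inv_inv] at econj
    have : h = (g⁻¹ * f * g) ^ n := by rw [econj, hn']; group
    rw [this]
    rcases h2 with h2 | h2 <;> rw [h2]
    · exact ⟨n, rfl⟩
    · exact ⟨-n, by simp [zpow_neg, inv_zpow]⟩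

/-- If `N` is a normal subgroup of `G` with the unique-roots property, then for every
`f ∈ N` of infinite order and every nonzero integer `t`, the normalizer in `G` of the
cyclic subgroup `⟨f⟩` equals the normalizer in `G` of `⟨f ^ t⟩`. -/
theorem normalizer_zpowers_eq_normalizer_zpowers_zpow {G : Type*} [Group G]
    (N : Subgroup G) (hN : N.Normal)
    (hroots : ∀ a ∈ N, ∀ b ∈ N, ∀ t : ℕ, 1 ≤ t → a ^ t = b ^ t → a = b)
    (f : G) (hf : f ∈ N) (hford : ¬ IsOfFinOrder f) (t : ℤ) (ht : t ≠ 0) :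
    Subgroup.normalizer (Subgroup.zpowers f : Set G) = Subgroup.normalizer (Subgroup.zpowers (f ^ t) : Set G) := by
  have hinj : Function.Injective (fun n : ℤ => f ^ n) :=
    injective_zpow_iff_not_isOfFinOrder.mpr hford
  -- unique roots for integer exponents
  have hrootsZ : ∀ a ∈ N, ∀ b ∈ N, ∀ s : ℤ, s ≠ 0 → a ^ s = b ^ s → a = b := by
    intro a ha b hb s hs h
    have hnat : a ^ (s.natAbs : ℤ) = b ^ (s.natAbs : ℤ) := by
      rcases Int.natAbs_eq s with he | he
      · rw [← he, h]
      · have : a ^ (-s) = b ^ (-s) := by rw [zpow_neg, zpow_neg, h]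
        rw [show (s.natAbs : ℤ) = -s by omega, this]
    rw [zpow_natCast, zpow_natCast] at hnat
    exact hroots a ha b hb s.natAbs (by omega) hnat
  -- f ^ t has infinite order
  have hft : ¬ IsOfFinOrder (f ^ t) := by
    intro hfin
    obtain ⟨n, hn, he⟩ := isOfFinOrder_iff_pow_eq_one.mp hfin
    have h0 : f ^ (t * (n : ℤ)) = f ^ (0 : ℤ) := by
      rw [zpow_mul, zpow_natCast, he, zpow_zero]
    have := hinj h0
    have hn' : (n : ℤ) ≠ 0 := by exact_mod_cast hn.ne'
    exact absurd this (mul_ne_zero ht hn')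
  apply le_antisymm
  · -- forward: g normalizes ⟨f⟩ ⇒ g normalizes ⟨f^t⟩
    intro g hg
    have c1 := conj_eq_self_or_inv f g hford hg
    have c2' := conj_eq_self_or_inv f g⁻¹ hford (inv_mem hg)
    rw [inv_inv] at c2'
    apply mem_normalizer_of_conj' (f ^ t) g
    · have e : g * f ^ t * g⁻¹ = (g * f * g⁻¹) ^ t := (conj_zpow).symm
      rcases c1 with h1 | h1
      · left; rw [e, h1]
      · right; rw [e, h1, inv_zpow]
    · have e : (g⁻¹ * f * g⁻¹⁻¹) ^ t = g⁻¹ * f ^ t * g⁻¹⁻¹ := conj_zpow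
      rw [inv_inv] at e
      rcases c2' with h2 | h2
      · left; rw [← e, h2]
      · right; rw [← e, h2, inv_zpow]
  · -- backward: g normalizes ⟨f^t⟩ ⇒ g normalizes ⟨f⟩
    intro g hg
    have key : ∀ x : G, x * f ^ t * x⁻¹ = f ^ t ∨ x * f ^ t * x⁻¹ = (f ^ t)⁻¹ →
        x * f * x⁻¹ = f ∨ x * f * x⁻¹ = f⁻¹ := by
      intro x hx
      have hconj : (x * f * x⁻¹) ^ t = x * f ^ t * x⁻¹ := conj_zpow
      have hxN : x * f * x⁻¹ ∈ N := hN.conj_mem f hf x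
      rcases hx with h | h
      · left
        exact hrootsZ _ hxN _ hf t ht (by rw [hconj, h])
      · right
        refine hrootsZ _ hxN _ (inv_mem hf) t ht ?_
        rw [hconj, h, inv_zpow]
    have c1 := key g (conj_eq_self_or_inv (f ^ t) g hft hg)
    have c2 := key g⁻¹ (conj_eq_self_or_inv (f ^ t) g⁻¹ hft (inv_mem hg))
    rw [inv_inv] at c2
    exact mem_normalizer_of_conj' f g c1 c2
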